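/- arXiv:math/0607704 — 2 statements merged into one kernel-verified Lean document; each statement's English description precedes it below -/
import Mathlib

section
/- For every nonnegative column-allowable 2×2 real matrix A = [[a,b],[c,d]], the supremum of d_columns(AA')/d_columns(A') over all nonnegative column-allowable 2×2 matrices A' with d_columns(A') ≠ 0 equals |det A| / min((a+c)², (b+d)²). -/
open Matrix

/-- A 2×2 real matrix is nonnegative and column-allowable. -/
def ColAllowable (A : Matrix (Fin 2) (Fin 2) ℝ) : Prop :=
  (∀ i j, 0 ≤ A i j) ∧ 0 < A 0 0 + A 1 0 ∧ 0 < A 0 1 + A 1 1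

/-- The distance between the (normalized) columns of `A`. -/
noncomputable def dcols (A : Matrix (Fin 2) (Fin 2) ℝ) : ℝ :=
  |A.det| / ((A 0 0 + A 1 0) * (A 0 1 + A 1 1))

lemma ratio1 (A : Matrix (Fin 2) (Fin 2) ℝ) (e : ℝ) (hp : 0 < A 0 0 + A 1 0)
    (hq : 0 < A 0 1 + A 1 1) (he : 0 < e) :
    dcols (A * Matrix.of ![![1, 1], ![e, 0]]) / dcols (Matrix.of ![![1, 1], ![e, 0]]) =
      |A.det| * (1 + e) / (((A 0 0 + A 1 0) + (A 0 1 + A 1 1) * e) * (A 0 0 + A 1 0)) := by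
  have h1 : dcols (A * Matrix.of ![![1, 1], ![e, 0]]) =
      |A.det| * e / (((A 0 0 + A 1 0) + (A 0 1 + A 1 1) * e) * (A 0 0 + A 1 0)) := by
    simp only [dcols, det_mul, abs_mul, Matrix.mul_apply, Fin.sum_univ_two, det_fin_two,
      Matrix.of_apply, Matrix.cons_val', Matrix.cons_val_zero, Matrix.cons_val_one,
      Matrix.head_cons, Matrix.head_fin_const, Matrix.empty_val', Matrix.cons_val_fin_one]
    rw [show (1:ℝ) * 0 - 1 * e = -e by ring, abs_neg, abs_of_pos he]
    ring_nf
  have h2 : dcols (Matrix.of ![![1, 1], ![e, 0]]) = e / ((1 + e) * 1) := by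
    simp only [dcols, det_fin_two, Matrix.of_apply, Matrix.cons_val', Matrix.cons_val_zero,
      Matrix.cons_val_one, Matrix.head_cons, Matrix.head_fin_const, Matrix.empty_val',
      Matrix.cons_val_fin_one]
    rw [show (1:ℝ) * 0 - 1 * e = -e by ring, abs_neg, abs_of_pos he]
    norm_num
  rw [h1, h2]
  have hd : 0 < ((A 0 0 + A 1 0) + (A 0 1 + A 1 1) * e) * (A 0 0 + A 1 0) := by positivity
  field_simp

lemma ratio2 (A : Matrix (Fin 2) (Fin 2) ℝ) (e : ℝ) (hp : 0 < A 0 0 + A 1 0)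
    (hq : 0 < A 0 1 + A 1 1) (he : 0 < e) :
    dcols (A * Matrix.of ![![0, e], ![1, 1]]) / dcols (Matrix.of ![![0, e], ![1, 1]]) =
      |A.det| * (1 + e) / (((A 0 1 + A 1 1) + (A 0 0 + A 1 0) * e) * (A 0 1 + A 1 1)) := by
  have h1 : dcols (A * Matrix.of ![![0, e], ![1, 1]]) =
      |A.det| * e / ((A 0 1 + A 1 1) * ((A 0 0 + A 1 0) * e + (A 0 1 + A 1 1))) := by
    simp only [dcols, det_mul, abs_mul, Matrix.mul_apply, Fin.sum_univ_two, det_fin_two,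
      Matrix.of_apply, Matrix.cons_val', Matrix.cons_val_zero, Matrix.cons_val_one,
      Matrix.head_cons, Matrix.head_fin_const, Matrix.empty_val', Matrix.cons_val_fin_one]
    rw [show (0:ℝ) * 1 - e * 1 = -e by ring, abs_neg, abs_of_pos he]
    ring_nf
  have h2 : dcols (Matrix.of ![![0, e], ![1, 1]]) = e / (e + 1) := by
    simp only [dcols, det_fin_two, Matrix.of_apply, Matrix.cons_val', Matrix.cons_val_zero,
      Matrix.cons_val_one, Matrix.head_cons, Matrix.head_fin_const, Matrix.empty_val',
      Matrix.cons_val_fin_one]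
    rw [show (0:ℝ) * 1 - e * 1 = -e by ring, abs_neg, abs_of_pos he]
    ring_nf
  rw [h1, h2]
  have hd : 0 < (A 0 1 + A 1 1) * ((A 0 0 + A 1 0) * e + (A 0 1 + A 1 1)) := by positivity
  field_simp
  ring

lemma colAllowable1 (e : ℝ) (he : 0 < e) : ColAllowable (Matrix.of ![![1, 1], ![e, 0]]) := by
  refine ⟨fun i j => ?_, by norm_num; linarith, by norm_num⟩
  fin_cases i <;> fin_cases j <;> simp [he.le]

lemma colAllowable2 (e : ℝ) (he : 0 < e) : ColAllowable (Matrix.of ![![0, e], ![1, 1]]) := by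
  refine ⟨fun i j => ?_, by norm_num, by norm_num; linarith⟩
  fin_cases i <;> fin_cases j <;> simp [he.le]

lemma dcols1_ne (e : ℝ) (he : 0 < e) : dcols (Matrix.of ![![1, 1], ![e, 0]]) ≠ 0 := by
  have h2 : dcols (Matrix.of ![![1, 1], ![e, 0]]) = e / ((1 + e) * 1) := by
    simp only [dcols, det_fin_two, Matrix.of_apply, Matrix.cons_val', Matrix.cons_val_zero,
      Matrix.cons_val_one, Matrix.head_cons, Matrix.head_fin_const, Matrix.empty_val',
      Matrix.cons_val_fin_one]
    rw [show (1:ℝ) * 0 - 1 * e = -e by ring, abs_neg, abs_of_pos he]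
    norm_num
  rw [h2]
  positivity

lemma dcols2_ne (e : ℝ) (he : 0 < e) : dcols (Matrix.of ![![0, e], ![1, 1]]) ≠ 0 := by
  have h2 : dcols (Matrix.of ![![0, e], ![1, 1]]) = e / (e + 1) := by
    simp only [dcols, det_fin_two, Matrix.of_apply, Matrix.cons_val', Matrix.cons_val_zero,
      Matrix.cons_val_one, Matrix.head_cons, Matrix.head_fin_const, Matrix.empty_val',
      Matrix.cons_val_fin_one]
    rw [show (0:ℝ) * 1 - e * 1 = -e by ring, abs_neg, abs_of_pos he]
    ring_nf
  rw [h2]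
  positivity

-- the key arithmetic fact
lemma key_arith (dA p q w : ℝ) (hdA : 0 < dA) (hp : 0 < p) (hq : 0 < q)
    (hwp : w * p ^ 2 < dA) :
    w * ((p + q * (( dA - w * p ^ 2) * p / (2 * dA * q))) * p) <
      dA * (1 + (dA - w * p ^ 2) * p / (2 * dA * q)) := by
  set c := dA - w * p ^ 2 with hcdef
  have hc : 0 < c := by rw [hcdef]; linarith
  set e := c * p / (2 * dA * q) with hedef
  have he : 0 < e := by rw [hedef]; positivity
  have h2dA : (0:ℝ) < 2 * dA := by linarith
  have hqe : q * e * (2 * dA) = c * p := by rw [hedef]; field_simp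
  have e2 : w * p ^ 2 = dA - c := by rw [hcdef]; ring
  rw [← mul_lt_mul_iff_of_pos_right h2dA]
  have e4 : w * ((p + q * e) * p) * (2 * dA) = (dA - c) * (2 * dA) + (dA - c) * c := by
    linear_combination (w * p) * hqe + (2 * dA + c) * e2
  rw [e4]
  nlinarith [mul_pos hdA hc, mul_pos hc hc, mul_pos (mul_pos hdA hdA) he]

lemma dcols_ratio_le (A B : Matrix (Fin 2) (Fin 2) ℝ) (hA : ColAllowable A)
    (hB : ColAllowable B) (hdB : dcols B ≠ 0) :
    dcols (A * B) / dcols B ≤ |A.det| / (min (A 0 0 + A 1 0) (A 0 1 + A 1 1)) ^ 2 := by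
  obtain ⟨hAn, hp, hq⟩ := hA
  obtain ⟨hBn, hs, ht⟩ := hB
  have hm : 0 < min (A 0 0 + A 1 0) (A 0 1 + A 1 1) := lt_min hp hq
  have hdetB : 0 < |B.det| := by
    rcases (abs_nonneg B.det).lt_or_eq with h | h
    · exact h
    · exact absurd (by simp [dcols, ← h]) hdB
  have hD1 : min (A 0 0 + A 1 0) (A 0 1 + A 1 1) * (B 0 0 + B 1 0) ≤
      (A 0 0 + A 1 0) * B 0 0 + (A 0 1 + A 1 1) * B 1 0 := by
    nlinarith [min_le_left (A 0 0 + A 1 0) (A 0 1 + A 1 1),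
      min_le_right (A 0 0 + A 1 0) (A 0 1 + A 1 1), hBn 0 0, hBn 1 0]
  have hD2 : min (A 0 0 + A 1 0) (A 0 1 + A 1 1) * (B 0 1 + B 1 1) ≤
      (A 0 0 + A 1 0) * B 0 1 + (A 0 1 + A 1 1) * B 1 1 := by
    nlinarith [min_le_left (A 0 0 + A 1 0) (A 0 1 + A 1 1),
      min_le_right (A 0 0 + A 1 0) (A 0 1 + A 1 1), hBn 0 1, hBn 1 1]
  have hD1' : 0 < (A 0 0 + A 1 0) * B 0 0 + (A 0 1 + A 1 1) * B 1 0 :=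
    lt_of_lt_of_le (by positivity) hD1
  have hD2' : 0 < (A 0 0 + A 1 0) * B 0 1 + (A 0 1 + A 1 1) * B 1 1 :=
    lt_of_lt_of_le (by positivity) hD2
  have hval : dcols (A * B) / dcols B = |A.det| * ((B 0 0 + B 1 0) * (B 0 1 + B 1 1)) /
      (((A 0 0 + A 1 0) * B 0 0 + (A 0 1 + A 1 1) * B 1 0) *
       ((A 0 0 + A 1 0) * B 0 1 + (A 0 1 + A 1 1) * B 1 1)) := by
    simp only [dcols, det_mul, abs_mul, Matrix.mul_apply, Fin.sum_univ_two]
    rw [div_div_div_comm, mul_div_assoc, div_self hdetB.ne', mul_one, div_div_eq_mul_div]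
    congr 1
    ring
  rw [hval, div_le_div_iff₀ (by positivity) (by positivity)]
  nlinarith [mul_le_mul hD1 hD2 (by positivity) hD1'.le, abs_nonneg A.det,
    mul_pos hs ht, mul_pos hm hm]

lemma colAllowable_one : ColAllowable 1 := by
  refine ⟨fun i j => ?_, by norm_num [Matrix.one_apply], by norm_num [Matrix.one_apply]⟩
  fin_cases i <;> fin_cases j <;> norm_num [Matrix.one_apply]

lemma dcols_one : dcols 1 = 1 := by norm_num [dcols, Matrix.one_apply]

theorem stmt2 (A : Matrix (Fin 2) (Fin 2) ℝ) (hA : ColAllowable A) :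
    sSup ((fun B => dcols (A * B) / dcols B) '' {B | ColAllowable B ∧ dcols B ≠ 0}) =
      |A.det| / min ((A 0 0 + A 1 0) ^ 2) ((A 0 1 + A 1 1) ^ 2) := by
  obtain ⟨hAn, hp, hq⟩ := hA
  have hminsq : min ((A 0 0 + A 1 0) ^ 2) ((A 0 1 + A 1 1) ^ 2) =
      (min (A 0 0 + A 1 0) (A 0 1 + A 1 1)) ^ 2 := by
    rcases le_total (A 0 0 + A 1 0) (A 0 1 + A 1 1) with h | h
    · rw [min_eq_left h, min_eq_left (by nlinarith)]
    · rw [min_eq_right h, min_eq_right (by nlinarith)]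
  rw [hminsq]
  apply csSup_eq_of_forall_le_of_forall_lt_exists_gt
  · exact ⟨dcols (A * 1) / dcols 1, ⟨1, ⟨colAllowable_one, by rw [dcols_one]; norm_num⟩, rfl⟩⟩
  · rintro a ⟨B, ⟨hB, hdB⟩, rfl⟩
    exact dcols_ratio_le A B ⟨hAn, hp, hq⟩ hB hdB
  · intro w hw
    by_cases hdet : A.det = 0
    · refine ⟨dcols (A * 1) / dcols 1,
        ⟨1, ⟨colAllowable_one, by rw [dcols_one]; norm_num⟩, rfl⟩, ?_⟩
      have h0 : |A.det| = 0 := by simp [hdet]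
      rw [h0, zero_div] at hw
      rw [mul_one, dcols_one, div_one]
      simp only [dcols, h0, zero_div]
      exact hw
    · have hdA : 0 < |A.det| := abs_pos.2 hdet
      rcases le_total (A 0 0 + A 1 0) (A 0 1 + A 1 1) with hpq | hpq
      · rw [min_eq_left hpq] at hw
        have hwp : w * (A 0 0 + A 1 0) ^ 2 < |A.det| := (lt_div_iff₀ (by positivity)).mp hw
        set e := (|A.det| - w * (A 0 0 + A 1 0) ^ 2) * (A 0 0 + A 1 0) /
          (2 * |A.det| * (A 0 1 + A 1 1)) with hedef
        have he : 0 < e := by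
          rw [hedef]
          have : 0 < |A.det| - w * (A 0 0 + A 1 0) ^ 2 := by linarith
          positivity
        refine ⟨dcols (A * Matrix.of ![![1, 1], ![e, 0]]) /
            dcols (Matrix.of ![![1, 1], ![e, 0]]),
          ⟨Matrix.of ![![1, 1], ![e, 0]], ⟨colAllowable1 e he, dcols1_ne e he⟩, rfl⟩, ?_⟩
        rw [ratio1 A e hp hq he, lt_div_iff₀ (by positivity)]
        have := key_arith |A.det| (A 0 0 + A 1 0) (A 0 1 + A 1 1) w hdA hp hq hwp
        rw [← hedef] at this
        linarith
      · rw [min_eq_right hpq] at hw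
        have hwp : w * (A 0 1 + A 1 1) ^ 2 < |A.det| := (lt_div_iff₀ (by positivity)).mp hw
        set e := (|A.det| - w * (A 0 1 + A 1 1) ^ 2) * (A 0 1 + A 1 1) /
          (2 * |A.det| * (A 0 0 + A 1 0)) with hedef
        have he : 0 < e := by
          rw [hedef]
          have : 0 < |A.det| - w * (A 0 1 + A 1 1) ^ 2 := by linarith
          positivity
        refine ⟨dcols (A * Matrix.of ![![0, e], ![1, 1]]) /
            dcols (Matrix.of ![![0, e], ![1, 1]]),
          ⟨Matrix.of ![![0, e], ![1, 1]], ⟨colAllowable2 e he, dcols2_ne e he⟩, rfl⟩, ?_⟩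
        rw [ratio2 A e hp hq he, lt_div_iff₀ (by positivity)]
        have := key_arith |A.det| (A 0 1 + A 1 1) (A 0 0 + A 1 0) w hdA hq hp hwp
        rw [← hedef] at this
        linarith
end

section
/- Suppose M satisfies: every matrix [[a,b],[0,d]] ∈ M has a < d; every matrix [[a,0],[c,d]] ∈ M has a > d; and whenever [[a,b],[c,0]] ∈ M and [[0,b'],[c',d']] ∈ M one has bc' < b'c. Then for every vector V = (v₁,v₂) with v₁, v₂ > 0, the sequence of maps ω ↦ N(Pₙ(ω)V) converges uniformly on S^ℕ. -/
open Matrix Filter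

/-- `n(X) = x₁/(x₁+x₂)`. -/
noncomputable def nv (X : Fin 2 → ℝ) : ℝ := X 0 / (X 0 + X 1)

/-- The normalized vector `N(X)`. -/
noncomputable def Nv (X : Fin 2 → ℝ) : Fin 2 → ℝ := ![nv X, 1 - nv X]

/-- `Pₙ(ω) = M_{ω₁} M_{ω₂} ⋯ M_{ωₙ}`. -/
def Pprod {s : ℕ} (M : Fin s → Matrix (Fin 2) (Fin 2) ℝ) (ω : ℕ → Fin s) (n : ℕ) :
    Matrix (Fin 2) (Fin 2) ℝ :=
  ((List.range n).map (fun i => M (ω i))).prod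

/-- The induced map on log-ratio coordinates. -/
noncomputable def Gmap (a b c d u : ℝ) : ℝ :=
  Real.log (a * Real.exp u + b) - Real.log (c * Real.exp u + d)

/-- Backward iteration of the induced maps. -/
noncomputable def Eit {s : ℕ} (M : Fin s → Matrix (Fin 2) (Fin 2) ℝ) (ω : ℕ → Fin s) :
    ℕ → ℝ → ℝ
  | 0, u => u
  | n+1, u => Eit M ω n (Gmap (M (ω n) 0 0) (M (ω n) 0 1) (M (ω n) 1 0) (M (ω n) 1 1) u)

lemma Pprod_succ {s : ℕ} (M : Fin s → Matrix (Fin 2) (Fin 2) ℝ) (ω : ℕ → Fin s) (n : ℕ) :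
    Pprod M ω (n+1) = Pprod M ω n * M (ω n) := by
  unfold Pprod
  rw [List.range_succ, List.map_append, List.prod_append]
  simp

lemma Eit_split {s : ℕ} (M : Fin s → Matrix (Fin 2) (Fin 2) ℝ) (ω : ℕ → Fin s) :
    ∀ (p n : ℕ) (u : ℝ), Eit M ω (n+p) u = Eit M ω n (Eit M (fun i => ω (n+i)) p u) := by
  intro p
  induction p with
  | zero => intro n u; rfl
  | succ p ih =>
    intro n u
    show Eit M ω (n+p+1) u = _
    rw [show Eit M ω (n+p+1) u
        = Eit M ω (n+p) (Gmap (M (ω (n+p)) 0 0) (M (ω (n+p)) 0 1) (M (ω (n+p)) 1 0)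
            (M (ω (n+p)) 1 1) u) from rfl, ih]
    rfl

lemma Eit_mem {s : ℕ} (M : Fin s → Matrix (Fin 2) (Fin 2) ℝ) (J : Set ℝ)
    (hJ : ∀ (k : Fin s) (u : ℝ), u ∈ J →
      Gmap (M k 0 0) (M k 0 1) (M k 1 0) (M k 1 1) u ∈ J) :
    ∀ (n : ℕ) (ω : ℕ → Fin s) (u : ℝ), u ∈ J → Eit M ω n u ∈ J := by
  intro n
  induction n with
  | zero => intro ω u hu; exact hu
  | succ n ih => intro ω u hu; exact ih ω _ (hJ (ω n) u hu)

lemma Eit_lip {s : ℕ} (M : Fin s → Matrix (Fin 2) (Fin 2) ℝ) (J : Set ℝ) (lam : ℝ)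
    (hlam : 0 ≤ lam)
    (hJ : ∀ (k : Fin s) (u : ℝ), u ∈ J →
      Gmap (M k 0 0) (M k 0 1) (M k 1 0) (M k 1 1) u ∈ J)
    (hL : ∀ (k : Fin s) (u u' : ℝ), u ∈ J → u' ∈ J →
      |Gmap (M k 0 0) (M k 0 1) (M k 1 0) (M k 1 1) u -
        Gmap (M k 0 0) (M k 0 1) (M k 1 0) (M k 1 1) u'| ≤ lam * |u - u'|) :
    ∀ (n : ℕ) (ω : ℕ → Fin s) (u u' : ℝ), u ∈ J → u' ∈ J →
      |Eit M ω n u - Eit M ω n u'| ≤ lam ^ n * |u - u'| := by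
  intro n
  induction n with
  | zero => intro ω u u' hu hu'; simp [Eit]
  | succ n ih =>
    intro ω u u' hu hu'
    calc |Eit M ω (n+1) u - Eit M ω (n+1) u'|
        = |Eit M ω n (Gmap _ _ _ _ u) - Eit M ω n (Gmap _ _ _ _ u')| := rfl
      _ ≤ lam ^ n * |Gmap (M (ω n) 0 0) (M (ω n) 0 1) (M (ω n) 1 0) (M (ω n) 1 1) u -
            Gmap (M (ω n) 0 0) (M (ω n) 0 1) (M (ω n) 1 0) (M (ω n) 1 1) u'| :=
          ih ω _ _ (hJ (ω n) u hu) (hJ (ω n) u' hu')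
      _ ≤ lam ^ n * (lam * |u - u'|) := by
          exact mul_le_mul_of_nonneg_left (hL (ω n) u u' hu hu') (pow_nonneg hlam n)
      _ = lam ^ (n+1) * |u - u'| := by ring

lemma Gmap_log (a b c d Y0 Y1 : ℝ) (h0 : 0 < Y0) (h1 : 0 < Y1)
    (hn : 0 < a*Y0 + b*Y1) (hd : 0 < c*Y0 + d*Y1) :
    Gmap a b c d (Real.log (Y0/Y1)) = Real.log ((a*Y0 + b*Y1)/(c*Y0 + d*Y1)) := by
  unfold Gmap
  rw [Real.exp_log (by positivity)]
  have e1 : a*(Y0/Y1) + b = (a*Y0 + b*Y1)/Y1 := by field_simp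
  have e2 : c*(Y0/Y1) + d = (c*Y0 + d*Y1)/Y1 := by field_simp
  rw [e1, e2, Real.log_div hn.ne' h1.ne', Real.log_div hd.ne' h1.ne',
    Real.log_div hn.ne' hd.ne']
  ring

lemma psi_lip (u u' : ℝ) :
    |Real.exp u / (Real.exp u + 1) - Real.exp u' / (Real.exp u' + 1)| ≤ |u - u'| := by
  have hd : ∀ v : ℝ, HasDerivAt (fun w => Real.exp w/(Real.exp w+1))
      (Real.exp v/(Real.exp v+1)^2) v := by
    intro v
    have hne : Real.exp v + 1 ≠ 0 := by positivity
    have h := (Real.hasDerivAt_exp v).fun_div ((Real.hasDerivAt_exp v).add_const 1) hne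
    exact h.congr_deriv (by ring)
  have := Convex.norm_image_sub_le_of_norm_hasDerivWithin_le
    (f := fun w => Real.exp w/(Real.exp w+1))
    (f' := fun v => Real.exp v/(Real.exp v+1)^2) (s := Set.univ) (C := 1)
    (fun x _ => (hd x).hasDerivWithinAt)
    (fun x _ => by
      rw [Real.norm_eq_abs, abs_of_pos (by positivity),
        div_le_one (by positivity)]
      nlinarith [Real.exp_pos x, sq_nonneg (Real.exp x)])
    convex_univ (Set.mem_univ u') (Set.mem_univ u)
  simpa [Real.norm_eq_abs] using this

set_option maxHeartbeats 2000000 in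
theorem stmt10 (s : ℕ) (M : Fin s → Matrix (Fin 2) (Fin 2) ℝ)
    (hM : ∀ k, ColAllowable (M k))
    (h1 : ∀ k, M k 1 0 = 0 → M k 0 0 < M k 1 1)
    (h2 : ∀ k, M k 0 1 = 0 → M k 1 1 < M k 0 0)
    (h3 : ∀ k l, M k 1 1 = 0 → M l 0 0 = 0 →
      M k 0 1 * M l 1 0 < M l 0 1 * M k 1 0) :
    ∀ V : Fin 2 → ℝ, 0 < V 0 → 0 < V 1 →
      ∃ F : (ℕ → Fin s) → (Fin 2 → ℝ),
        TendstoUniformly (fun n ω => Nv ((Pprod M ω n).mulVec V)) F atTop := by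
  intro V hV0 hV1
  rcases isEmpty_or_nonempty (Fin s) with hs | hs
  · refine ⟨fun _ => 0, Metric.tendstoUniformly_iff.mpr ?_⟩
    intro ε hε
    filter_upwards with n ω
    exact (hs.false (ω 0)).elim
  -- basic entry facts
  have nn : ∀ k (i j : Fin 2), 0 ≤ M k i j := fun k => (hM k).1
  have col1 : ∀ k, 0 < M k 0 0 + M k 1 0 := fun k => (hM k).2.1
  have col2 : ∀ k, 0 < M k 0 1 + M k 1 1 := fun k => (hM k).2.2
  have hC : ∀ k, M k 1 0 = 0 → 0 < M k 0 0 ∧ 0 < M k 0 1 ∧ 0 < M k 1 1 := by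
    intro k hc
    have had := h1 k hc
    have ha : 0 < M k 0 0 := by have := col1 k; linarith
    have hb : 0 < M k 0 1 := by
      rcases (nn k 0 1).eq_or_lt with h | h
      · exact absurd (h2 k h.symm) (by linarith)
      · exact h
    exact ⟨ha, hb, by linarith⟩
  have hB : ∀ k, M k 0 1 = 0 → 0 < M k 0 0 ∧ 0 < M k 1 0 ∧ 0 < M k 1 1 := by
    intro k hb
    have had := h2 k hb
    have hd : 0 < M k 1 1 := by have := col2 k; linarith
    have hc : 0 < M k 1 0 := by
      rcases (nn k 1 0).eq_or_lt with h | h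
      · exact absurd (h1 k h.symm) (by linarith)
      · exact h
    exact ⟨by linarith, hc, hd⟩
  have hA : ∀ k, M k 0 0 = 0 → 0 < M k 0 1 ∧ 0 < M k 1 0 ∧ 0 < M k 1 1 := by
    intro k ha
    have hc : 0 < M k 1 0 := by have := col1 k; linarith
    have hb : 0 < M k 0 1 := by
      rcases (nn k 0 1).eq_or_lt with h | h
      · exact absurd (hB k h.symm).1 (by linarith)
      · exact h
    have hd : 0 < M k 1 1 := by
      rcases (nn k 1 1).eq_or_lt with h | h
      · exact absurd (h3 k k h.symm ha) (lt_irrefl _)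
      · exact h
    exact ⟨hb, hc, hd⟩
  have hD : ∀ k, M k 1 1 = 0 → 0 < M k 0 0 ∧ 0 < M k 0 1 ∧ 0 < M k 1 0 := by
    intro k hd
    have hb : 0 < M k 0 1 := by have := col2 k; linarith
    have ha : 0 < M k 0 0 := by
      rcases (nn k 0 0).eq_or_lt with h | h
      · exact absurd (h3 k k hd h.symm) (lt_irrefl _)
      · exact h
    have hc : 0 < M k 1 0 := by
      rcases (nn k 1 0).eq_or_lt with h | h
      · exact absurd (hC k h.symm).2.2 (by linarith)
      · exact h
    exact ⟨ha, hb, hc⟩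
  have hab : ∀ k (t : ℝ), 0 < t → 0 < M k 0 0 * t + M k 0 1 := by
    intro k t ht
    rcases (nn k 0 0).eq_or_lt with h | h
    · have := (hA k h.symm).1; nlinarith
    · nlinarith [nn k 0 1]
  have hcd : ∀ k (t : ℝ), 0 < t → 0 < M k 1 0 * t + M k 1 1 := by
    intro k t ht
    rcases (nn k 1 0).eq_or_lt with h | h
    · have := (hC k h.symm).2.2; nlinarith
    · nlinarith [nn k 1 1]
  have hacbd : ∀ k, 0 < M k 0 0 * M k 1 0 ∨ 0 < M k 0 1 * M k 1 1 := by
    intro k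
    rcases (nn k 0 0).eq_or_lt with h | h
    · right; obtain ⟨hb, _, hd⟩ := hA k h.symm; nlinarith
    · rcases (nn k 1 0).eq_or_lt with h' | h'
      · right; obtain ⟨_, hb, hd⟩ := hC k h'.symm; nlinarith
      · left; nlinarith
  -- construction of the pivot constant R
  obtain ⟨R, hR0, hRD, hRA⟩ : ∃ R : ℝ, 0 < R ∧
      (∀ k, M k 1 1 = 0 → M k 0 1 < M k 1 0 * R) ∧
      (∀ k, M k 0 0 = 0 → M k 1 0 * R < M k 0 1) := by
    classical
    set DD := Finset.univ.filter (fun k : Fin s => M k 1 1 = 0) with hDDdef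
    set AA := Finset.univ.filter (fun k : Fin s => M k 0 0 = 0) with hAAdef
    set g : Fin s → ℝ := fun k => M k 0 1 / M k 1 0 with hgdef
    have hgD : ∀ k ∈ DD, 0 < g k := by
      intro k hk
      obtain ⟨_, hb, hc⟩ := hD k (by simpa [hDDdef] using hk)
      exact div_pos hb hc
    have hgA : ∀ k ∈ AA, 0 < g k := by
      intro k hk
      obtain ⟨hb, hc, _⟩ := hA k (by simpa [hAAdef] using hk)
      exact div_pos hb hc
    have hcross : ∀ k ∈ DD, ∀ l ∈ AA, g k < g l := by
      intro k hk l hl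
      have hdk : M k 1 1 = 0 := by simpa [hDDdef] using hk
      have hal : M l 0 0 = 0 := by simpa [hAAdef] using hl
      obtain ⟨_, _, hck⟩ := hD k hdk
      obtain ⟨_, hcl, _⟩ := hA l hal
      have := h3 k l hdk hal
      exact div_lt_div_iff₀ hck hcl |>.mpr (by nlinarith)
    have hDfin : ∀ (Rv : ℝ), (∀ k ∈ DD, g k < Rv) →
        (∀ k, M k 1 1 = 0 → M k 0 1 < M k 1 0 * Rv) := by
      intro Rv h k hk
      obtain ⟨_, _, hc⟩ := hD k hk
      have := h k (by simp [hDDdef, hk])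
      rw [hgdef] at this
      simpa [div_lt_iff₀ hc, mul_comm] using this
    have hAfin : ∀ (Rv : ℝ), (∀ k ∈ AA, Rv < g k) →
        (∀ k, M k 0 0 = 0 → M k 1 0 * Rv < M k 0 1) := by
      intro Rv h k hk
      obtain ⟨_, hc, _⟩ := hA k hk
      have := h k (by simp [hAAdef, hk])
      rw [hgdef] at this
      rw [lt_div_iff₀ hc] at this
      linarith
    by_cases hD0 : DD.Nonempty
    · by_cases hA0 : AA.Nonempty
      · refine ⟨(DD.sup' hD0 g + AA.inf' hA0 g)/2, ?_, ?_, ?_⟩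
        · obtain ⟨k, hk⟩ := id hD0
          have h1' : g k ≤ DD.sup' hD0 g := Finset.le_sup' g hk
          have h2' : 0 < AA.inf' hA0 g := (Finset.lt_inf'_iff hA0).mpr hgA
          have := hgD k hk
          linarith
        · apply hDfin
          intro k hk
          have h1' : g k ≤ DD.sup' hD0 g := Finset.le_sup' g hk
          have h2' : DD.sup' hD0 g < AA.inf' hA0 g := by
            rw [Finset.sup'_lt_iff hD0]
            intro k' hk'
            rw [Finset.lt_inf'_iff hA0]
            exact fun l hl => hcross k' hk' l hl
          linarith
        · apply hAfin
          intro l hl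
          have h1' : AA.inf' hA0 g ≤ g l := Finset.inf'_le g hl
          have h2' : DD.sup' hD0 g < AA.inf' hA0 g := by
            rw [Finset.sup'_lt_iff hD0]
            intro k' hk'
            rw [Finset.lt_inf'_iff hA0]
            exact fun l' hl' => hcross k' hk' l' hl'
          linarith
      · refine ⟨DD.sup' hD0 g + 1, ?_, ?_, ?_⟩
        · obtain ⟨k, hk⟩ := id hD0
          have := hgD k hk
          have h1' : g k ≤ DD.sup' hD0 g := Finset.le_sup' g hk
          linarith
        · apply hDfin
          intro k hk
          have := Finset.le_sup' g hk
          linarith [Finset.le_sup' g hk]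
        · intro k hk
          exact absurd ⟨k, by simp [hAAdef, hk]⟩ hA0
    · by_cases hA0 : AA.Nonempty
      · refine ⟨AA.inf' hA0 g / 2, ?_, ?_, ?_⟩
        · have h2' : 0 < AA.inf' hA0 g := (Finset.lt_inf'_iff hA0).mpr hgA
          linarith
        · intro k hk
          exact absurd ⟨k, by simp [hDDdef, hk]⟩ hD0
        · apply hAfin
          intro l hl
          have h1' : AA.inf' hA0 g ≤ g l := Finset.inf'_le g hl
          have h2' : 0 < AA.inf' hA0 g := (Finset.lt_inf'_iff hA0).mpr hgA
          linarith
      · refine ⟨1, one_pos, ?_, ?_⟩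
        · intro k hk
          exact absurd ⟨k, by simp [hDDdef, hk]⟩ hD0
        · intro k hk
          exact absurd ⟨k, by simp [hAAdef, hk]⟩ hA0
  -- per-matrix smallness bound
  have heps : ∀ k : Fin s, ∃ e : ℝ, 0 < e ∧ ∀ m T : ℝ, 0 < m → m ≤ e → m * T = R →
      (m*(M k 1 0*m + M k 1 1) ≤ M k 0 0*m + M k 0 1 ∧
       m*(M k 1 0*T + M k 1 1) ≤ M k 0 0*T + M k 0 1 ∧
       M k 0 0*m + M k 0 1 ≤ T*(M k 1 0*m + M k 1 1) ∧
       M k 0 0*T + M k 0 1 ≤ T*(M k 1 0*T + M k 1 1)) := by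
    intro k
    have ha0 := nn k 0 0
    have hb0 := nn k 0 1
    have hc0 := nn k 1 0
    have hd0 := nn k 1 1
    have hTpos : ∀ m T : ℝ, 0 < m → m * T = R → 0 < T := by
      intro m T hm hmT
      by_contra h
      push_neg at h
      have : m * T ≤ 0 := mul_nonpos_of_nonneg_of_nonpos hm.le h
      linarith
    obtain ⟨e1, he1, H1⟩ : ∃ e, 0 < e ∧ ∀ m T : ℝ, 0 < m → m ≤ e → m * T = R →
        m*(M k 1 0*m + M k 1 1) ≤ M k 0 0*m + M k 0 1 := by
      rcases (nn k 0 1).eq_or_lt with hb | hb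
      · obtain ⟨ha, hc, hd⟩ := hB k hb.symm
        have had := h2 k hb.symm
        refine ⟨(M k 0 0 - M k 1 1)/M k 1 0, div_pos (by linarith) hc,
          fun m T hm hme hmT => ?_⟩
        have h' : m * M k 1 0 ≤ M k 0 0 - M k 1 1 := by
          rw [← le_div_iff₀ hc]; exact hme
        have h'' := mul_le_mul_of_nonneg_left h' hm.le
        nlinarith
      · refine ⟨min 1 (M k 0 1/(M k 1 0 + M k 1 1 + 1)), by positivity,
          fun m T hm hme hmT => ?_⟩
        have hm1 : m ≤ 1 := le_trans hme (min_le_left _ _)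
        have h2' : m*(M k 1 0 + M k 1 1 + 1) ≤ M k 0 1 := by
          rw [← le_div_iff₀ (by positivity)]; exact le_trans hme (min_le_right _ _)
        nlinarith [mul_nonneg (nn k 1 0) (mul_nonneg hm.le (sub_nonneg.mpr hm1)),
          mul_nonneg (nn k 0 0) hm.le]
    obtain ⟨e2, he2, H2⟩ : ∃ e, 0 < e ∧ ∀ m T : ℝ, 0 < m → m ≤ e → m * T = R →
        m*(M k 1 0*T + M k 1 1) ≤ M k 0 0*T + M k 0 1 := by
      rcases (nn k 0 0).eq_or_lt with ha | ha
      · obtain ⟨hb, hc, hd⟩ := hA k ha.symm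
        have hbc := hRA k ha.symm
        refine ⟨(M k 0 1 - M k 1 0 * R)/(M k 1 1 + 1),
          div_pos (by linarith) (by positivity), fun m T hm hme hmT => ?_⟩
        have hT := hTpos m T hm hmT
        have h' : m*(M k 1 1 + 1) ≤ M k 0 1 - M k 1 0 * R := by
          rw [← le_div_iff₀ (by positivity)]; exact hme
        have hc2 : m*(M k 1 0*T) = M k 1 0 * R := by rw [← hmT]; ring
        have haT : M k 0 0*T = 0 := by rw [← ha, zero_mul]
        nlinarith
      · refine ⟨min 1 (M k 0 0*R/(M k 1 0*R + M k 1 1 + 1)), by positivity,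
          fun m T hm hme hmT => ?_⟩
        have hT := hTpos m T hm hmT
        have hm1 : m ≤ 1 := le_trans hme (min_le_left _ _)
        have h2' : m*(M k 1 0*R + M k 1 1 + 1) ≤ M k 0 0*R := by
          rw [← le_div_iff₀ (by positivity)]; exact le_trans hme (min_le_right _ _)
        have ha2 : m*(M k 0 0*T) = M k 0 0 * R := by rw [← hmT]; ring
        have hc2 : m*(M k 1 0*T) = M k 1 0 * R := by rw [← hmT]; ring
        have key : m*(M k 1 0*R + M k 1 1) ≤ m*(M k 0 0*T) := by linarith
        have key2 : M k 1 0*R + M k 1 1 ≤ M k 0 0*T := le_of_mul_le_mul_left key hm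
        have hdm : m * M k 1 1 ≤ M k 1 1 := by nlinarith
        linarith
    obtain ⟨e3, he3, H3⟩ : ∃ e, 0 < e ∧ ∀ m T : ℝ, 0 < m → m ≤ e → m * T = R →
        M k 0 0*m + M k 0 1 ≤ T*(M k 1 0*m + M k 1 1) := by
      rcases (nn k 1 1).eq_or_lt with hd | hd
      · obtain ⟨ha, hb, hc⟩ := hD k hd.symm
        have hbc := hRD k hd.symm
        refine ⟨(M k 1 0 * R - M k 0 1)/(M k 0 0 + 1),
          div_pos (by linarith) (by positivity), fun m T hm hme hmT => ?_⟩
        have hT := hTpos m T hm hmT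
        have h' : m*(M k 0 0 + 1) ≤ M k 1 0 * R - M k 0 1 := by
          rw [← le_div_iff₀ (by positivity)]; exact hme
        have hc2 : T*(M k 1 0*m) = M k 1 0 * R := by rw [← hmT]; ring
        have hdT : T * M k 1 1 = 0 := by rw [← hd, mul_zero]
        have ham : M k 0 0 * m ≤ m*(M k 0 0 + 1) := by nlinarith
        linarith
      · have hab0 : 0 < M k 0 0 + M k 0 1 := by
          rcases (nn k 0 0).eq_or_lt with h | h
          · have := (hA k h.symm).1; linarith
          · linarith
        refine ⟨min 1 (M k 1 1*R/(M k 0 0 + M k 0 1)), by positivity,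
          fun m T hm hme hmT => ?_⟩
        have hT := hTpos m T hm hmT
        have hm1 : m ≤ 1 := le_trans hme (min_le_left _ _)
        have h2' : m*(M k 0 0 + M k 0 1) ≤ M k 1 1*R := by
          rw [← le_div_iff₀ (by positivity)]; exact le_trans hme (min_le_right _ _)
        have hd2 : m*(T*M k 1 1) = M k 1 1 * R := by rw [← hmT]; ring
        have key : m*(M k 0 0 + M k 0 1) ≤ m*(T*M k 1 1) := by linarith
        have key2 : M k 0 0 + M k 0 1 ≤ T*M k 1 1 := le_of_mul_le_mul_left key hm
        have ham : M k 0 0 * m ≤ M k 0 0 := by nlinarith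
        have hcmT : 0 ≤ T*(M k 1 0*m) := by positivity
        linarith
    obtain ⟨e4, he4, H4⟩ : ∃ e, 0 < e ∧ ∀ m T : ℝ, 0 < m → m ≤ e → m * T = R →
        M k 0 0*T + M k 0 1 ≤ T*(M k 1 0*T + M k 1 1) := by
      rcases (nn k 1 0).eq_or_lt with hc | hc
      · obtain ⟨ha, hb, hd⟩ := hC k hc.symm
        have had := h1 k hc.symm
        refine ⟨(M k 1 1 - M k 0 0)*R/M k 0 1,
          div_pos (mul_pos (by linarith) hR0) hb, fun m T hm hme hmT => ?_⟩
        have hT := hTpos m T hm hmT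
        have h' : m*(M k 0 1) ≤ (M k 1 1 - M k 0 0)*R := by
          rw [← le_div_iff₀ hb]; exact hme
        have e0 : (M k 1 1 - M k 0 0)*R = m*((M k 1 1 - M k 0 0)*T) := by
          rw [← hmT]; ring
        have key : m*(M k 0 1) ≤ m*((M k 1 1 - M k 0 0)*T) := by linarith [e0 ▸ h']
        have key2 : M k 0 1 ≤ (M k 1 1 - M k 0 0)*T := le_of_mul_le_mul_left key hm
        have hcz : T*(M k 1 0*T) = 0 := by rw [← hc, zero_mul, mul_zero]
        linarith
      · have haRb : 0 < M k 0 0*R + M k 0 1 := by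
          rcases (nn k 0 0).eq_or_lt with h | h
          · have := (hA k h.symm).1; nlinarith
          · nlinarith
        refine ⟨min 1 (M k 1 0*R*R/(M k 0 0*R + M k 0 1)), by positivity,
          fun m T hm hme hmT => ?_⟩
        have hT := hTpos m T hm hmT
        have hm1 : m ≤ 1 := le_trans hme (min_le_left _ _)
        have h2' : m*(M k 0 0*R + M k 0 1) ≤ M k 1 0*R*R := by
          rw [← le_div_iff₀ (by positivity)]; exact le_trans hme (min_le_right _ _)
        have e0 : M k 1 0*R*R = m*(m*(M k 1 0*T*T)) := by rw [← hmT]; ring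
        have key : m*(M k 0 0*R + M k 0 1) ≤ m*(m*(M k 1 0*T*T)) := by
          linarith [e0 ▸ h2']
        have key2 : M k 0 0*R + M k 0 1 ≤ m*(M k 1 0*T*T) := le_of_mul_le_mul_left key hm
        have e1 : M k 0 0*R = m*(M k 0 0*T) := by rw [← hmT]; ring
        have hbm : m * M k 0 1 ≤ M k 0 1 := by nlinarith
        have key3 : m*(M k 0 0*T + M k 0 1) ≤ m*(M k 1 0*T*T) := by linarith
        have key4 : M k 0 0*T + M k 0 1 ≤ M k 1 0*T*T := le_of_mul_le_mul_left key3 hm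
        have hdT : 0 ≤ T*M k 1 1 := by positivity
        nlinarith
    refine ⟨min (min e1 e2) (min e3 e4), by positivity, fun m T hm hme hmT => ?_⟩
    exact ⟨H1 m T hm (le_trans hme ((min_le_left _ _).trans (min_le_left _ _))) hmT,
      H2 m T hm (le_trans hme ((min_le_left _ _).trans (min_le_right _ _))) hmT,
      H3 m T hm (le_trans hme ((min_le_right _ _).trans (min_le_left _ _))) hmT,
      H4 m T hm (le_trans hme ((min_le_right _ _).trans (min_le_right _ _))) hmT⟩
  -- global invariant interval
  choose ef hef using heps
  have hone : (Finset.univ : Finset (Fin s)).Nonempty := Finset.univ_nonempty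
  set tV : ℝ := V 0 / V 1 with htVdef
  have htV0 : 0 < tV := div_pos hV0 hV1
  set m : ℝ := min (min (Finset.univ.inf' hone ef) tV) (R/(tV*2)) with hmdef
  have hm0 : 0 < m := by
    refine lt_min (lt_min ?_ htV0) (by positivity)
    exact (Finset.lt_inf'_iff hone).mpr fun k _ => (hef k).1
  set T : ℝ := R/m with hTdef
  have hmT : m * T = R := by
    rw [hTdef]; field_simp
  have hT0 : 0 < T := by rw [hTdef]; positivity
  have hmtV : m ≤ tV := (min_le_left _ _).trans (min_le_right _ _)
  have htVT : tV < T := by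
    have h' : m ≤ R/(tV*2) := min_le_right _ _
    have h2' : m*(tV*2) ≤ R := by
      rw [← le_div_iff₀ (by positivity)]; exact h'
    nlinarith
  have hmle : m ≤ T := hmtV.trans htVT.le
  have hmlt : m < T := lt_of_le_of_lt hmtV htVT
  have hGood : ∀ k, (m*(M k 1 0*m + M k 1 1) ≤ M k 0 0*m + M k 0 1 ∧
       m*(M k 1 0*T + M k 1 1) ≤ M k 0 0*T + M k 0 1 ∧
       M k 0 0*m + M k 0 1 ≤ T*(M k 1 0*m + M k 1 1) ∧
       M k 0 0*T + M k 0 1 ≤ T*(M k 1 0*T + M k 1 1)) := by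
    intro k
    refine (hef k).2 m T hm0 ?_ hmT
    exact ((min_le_left _ _).trans (min_le_left _ _)).trans
      (Finset.inf'_le ef (Finset.mem_univ k))
  have hinv : ∀ k (t : ℝ), m ≤ t → t ≤ T →
      m ≤ (M k 0 0*t + M k 0 1)/(M k 1 0*t + M k 1 1) ∧
      (M k 0 0*t + M k 0 1)/(M k 1 0*t + M k 1 1) ≤ T := by
    intro k t h1t h2t
    have ht0 : 0 < t := lt_of_lt_of_le hm0 h1t
    have hcd0 : 0 < M k 1 0 * t + M k 1 1 := hcd k t ht0
    obtain ⟨g1, g2, g3, g4⟩ := hGood k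
    constructor
    · rw [le_div_iff₀ hcd0]
      have idd : (T - m) * (M k 0 0*t + M k 0 1 - m*(M k 1 0*t + M k 1 1))
          = (T - t)*(M k 0 0*m + M k 0 1 - m*(M k 1 0*m + M k 1 1))
            + (t - m)*(M k 0 0*T + M k 0 1 - m*(M k 1 0*T + M k 1 1)) := by ring
      have hrhs : 0 ≤ (T - t)*(M k 0 0*m + M k 0 1 - m*(M k 1 0*m + M k 1 1))
            + (t - m)*(M k 0 0*T + M k 0 1 - m*(M k 1 0*T + M k 1 1)) :=
        add_nonneg (mul_nonneg (by linarith) (by linarith))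
          (mul_nonneg (by linarith) (by linarith))
      have hpos : 0 ≤ (T - m) * (M k 0 0*t + M k 0 1 - m*(M k 1 0*t + M k 1 1)) := by
        rw [idd]; exact hrhs
      have hX : 0 ≤ M k 0 0*t + M k 0 1 - m*(M k 1 0*t + M k 1 1) := by
        by_contra hcon
        push_neg at hcon
        nlinarith
      linarith
    · rw [div_le_iff₀ hcd0]
      have idd : (T - m) * (T*(M k 1 0*t + M k 1 1) - (M k 0 0*t + M k 0 1))
          = (T - t)*(T*(M k 1 0*m + M k 1 1) - (M k 0 0*m + M k 0 1))
            + (t - m)*(T*(M k 1 0*T + M k 1 1) - (M k 0 0*T + M k 0 1)) := by ring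
      have hrhs : 0 ≤ (T - t)*(T*(M k 1 0*m + M k 1 1) - (M k 0 0*m + M k 0 1))
            + (t - m)*(T*(M k 1 0*T + M k 1 1) - (M k 0 0*T + M k 0 1)) :=
        add_nonneg (mul_nonneg (by linarith) (by linarith))
          (mul_nonneg (by linarith) (by linarith))
      have hpos : 0 ≤ (T - m) * (T*(M k 1 0*t + M k 1 1) - (M k 0 0*t + M k 0 1)) := by
        rw [idd]; exact hrhs
      have hX : 0 ≤ T*(M k 1 0*t + M k 1 1) - (M k 0 0*t + M k 0 1) := by
        by_contra hcon
        push_neg at hcon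
        nlinarith
      linarith
  -- log-coordinate interval
  set J : Set ℝ := Set.Icc (Real.log m) (Real.log T) with hJdef
  have hmemJ : ∀ u : ℝ, u ∈ J → m ≤ Real.exp u ∧ Real.exp u ≤ T := by
    intro u hu
    constructor
    · calc m = Real.exp (Real.log m) := (Real.exp_log hm0).symm
        _ ≤ Real.exp u := Real.exp_le_exp.mpr hu.1
    · calc Real.exp u ≤ Real.exp (Real.log T) := Real.exp_le_exp.mpr hu.2
        _ = T := Real.exp_log hT0
  have hGJ : ∀ (k : Fin s) (u : ℝ), u ∈ J →
      Gmap (M k 0 0) (M k 0 1) (M k 1 0) (M k 1 1) u ∈ J := by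
    intro k u hu
    obtain ⟨htm, htT⟩ := hmemJ u hu
    set t := Real.exp u with htdef
    have ht0 : 0 < t := Real.exp_pos u
    obtain ⟨hl, hr⟩ := hinv k t htm htT
    have hnum := hab k t ht0
    have hden := hcd k t ht0
    have hGval : Gmap (M k 0 0) (M k 0 1) (M k 1 0) (M k 1 1) u
        = Real.log ((M k 0 0*t + M k 0 1)/(M k 1 0*t + M k 1 1)) := by
      unfold Gmap
      rw [Real.log_div hnum.ne' hden.ne']
    rw [hGval]
    exact ⟨Real.log_le_log hm0 hl,
      Real.log_le_log (div_pos hnum hden) hr⟩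
  -- contraction constant
  set lam : ℝ := Finset.univ.sup' hone (fun k =>
    1 - (M k 0 0*M k 1 0*m^2 + M k 0 1*M k 1 1)
        /((M k 0 0*T + M k 0 1)*(M k 1 0*T + M k 1 1))) with hlamdef
  have hTheta : ∀ k, 0 < (M k 0 0*T + M k 0 1)*(M k 1 0*T + M k 1 1) :=
    fun k => mul_pos (hab k T hT0) (hcd k T hT0)
  have hdelta : ∀ k, 0 < M k 0 0*M k 1 0*m^2 + M k 0 1*M k 1 1 := by
    intro k
    rcases hacbd k with h | h
    · nlinarith [mul_pos h (pow_pos hm0 2), mul_nonneg (nn k 0 1) (nn k 1 1)]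
    · nlinarith [mul_nonneg (mul_nonneg (nn k 0 0) (nn k 1 0)) (sq_nonneg m)]
  have hlamk : ∀ k : Fin s, 1 - (M k 0 0*M k 1 0*m^2 + M k 0 1*M k 1 1)
      /((M k 0 0*T + M k 0 1)*(M k 1 0*T + M k 1 1)) ≤ lam := by
    intro k
    rw [hlamdef]
    exact Finset.le_sup' (fun k => 1 - (M k 0 0*M k 1 0*m^2 + M k 0 1*M k 1 1)
      /((M k 0 0*T + M k 0 1)*(M k 1 0*T + M k 1 1))) (Finset.mem_univ k)
  have hlam1 : lam < 1 := by
    rw [hlamdef, Finset.sup'_lt_iff hone]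
    intro k _
    have := div_pos (hdelta k) (hTheta k)
    linarith
  have hlam0 : 0 ≤ lam := by
    obtain ⟨k0, hk0⟩ := id hone
    refine le_trans ?_ (hlamk k0)
    rw [sub_nonneg, div_le_one (hTheta k0)]
    nlinarith [mul_nonneg (mul_nonneg (nn k0 0 0) (nn k0 1 0))
        (mul_nonneg (sub_nonneg.mpr hmle) (by linarith : (0:ℝ) ≤ T + m)),
      mul_nonneg (mul_nonneg (nn k0 0 0) (nn k0 1 1)) hT0.le,
      mul_nonneg (mul_nonneg (nn k0 0 1) (nn k0 1 0)) hT0.le]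
  -- the Lipschitz bound for each Gmap on J
  have hGlip : ∀ (k : Fin s) (u u' : ℝ), u ∈ J → u' ∈ J →
      |Gmap (M k 0 0) (M k 0 1) (M k 1 0) (M k 1 1) u -
        Gmap (M k 0 0) (M k 0 1) (M k 1 0) (M k 1 1) u'| ≤ lam * |u - u'| := by
    intro k u u' hu hu'
    have hderiv : ∀ v : ℝ, HasDerivAt
        (fun w => Gmap (M k 0 0) (M k 0 1) (M k 1 0) (M k 1 1) w)
        (M k 0 0*Real.exp v/(M k 0 0*Real.exp v + M k 0 1)
          - M k 1 0*Real.exp v/(M k 1 0*Real.exp v + M k 1 1)) v := by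
      intro v
      have hev := Real.exp_pos v
      have hnum := hab k _ hev
      have hden := hcd k _ hev
      have d1 : HasDerivAt (fun w => M k 0 0*Real.exp w + M k 0 1)
          (M k 0 0*Real.exp v) v := ((Real.hasDerivAt_exp v).const_mul _).add_const _
      have d2 : HasDerivAt (fun w => M k 1 0*Real.exp w + M k 1 1)
          (M k 1 0*Real.exp v) v := ((Real.hasDerivAt_exp v).const_mul _).add_const _
      exact (d1.log hnum.ne').sub (d2.log hden.ne')
    have hbound : ∀ v ∈ J,
        ‖M k 0 0*Real.exp v/(M k 0 0*Real.exp v + M k 0 1)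
          - M k 1 0*Real.exp v/(M k 1 0*Real.exp v + M k 1 1)‖ ≤ lam := by
      intro v hv
      obtain ⟨htm, htT⟩ := hmemJ v hv
      set t := Real.exp v with htdef
      have ht0 : 0 < t := Real.exp_pos v
      have hnum := hab k t ht0
      have hden := hcd k t ht0
      have hX : 0 < (M k 0 0*t + M k 0 1)*(M k 1 0*t + M k 1 1) := mul_pos hnum hden
      have hDeq : M k 0 0*t/(M k 0 0*t + M k 0 1) - M k 1 0*t/(M k 1 0*t + M k 1 1)
          = (M k 0 0*M k 1 1 - M k 0 1*M k 1 0)*t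
            /((M k 0 0*t + M k 0 1)*(M k 1 0*t + M k 1 1)) := by
        rw [div_sub_div _ _ hnum.ne' hden.ne']
        ring
      rw [Real.norm_eq_abs, hDeq, abs_div, abs_of_pos hX, div_le_iff₀ hX]
      -- |det| * t ≤ (ad+bc) * t
      have habs : |(M k 0 0*M k 1 1 - M k 0 1*M k 1 0)*t|
          ≤ (M k 0 0*M k 1 1 + M k 0 1*M k 1 0)*t := by
        rw [abs_mul, abs_of_pos ht0]
        have : |M k 0 0*M k 1 1 - M k 0 1*M k 1 0| ≤ M k 0 0*M k 1 1 + M k 0 1*M k 1 0 := by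
          rw [abs_le]
          constructor
          · nlinarith [mul_nonneg (nn k 0 0) (nn k 1 1)]
          · nlinarith [mul_nonneg (nn k 0 1) (nn k 1 0)]
        exact mul_le_mul_of_nonneg_right this ht0.le
      -- X ≤ Θ
      have hXT : (M k 0 0*t + M k 0 1)*(M k 1 0*t + M k 1 1)
          ≤ (M k 0 0*T + M k 0 1)*(M k 1 0*T + M k 1 1) := by
        have e1 : M k 0 0*t + M k 0 1 ≤ M k 0 0*T + M k 0 1 := by
          nlinarith [mul_nonneg (nn k 0 0) (sub_nonneg.mpr htT)]
        have e2 : M k 1 0*t + M k 1 1 ≤ M k 1 0*T + M k 1 1 := by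
          nlinarith [mul_nonneg (nn k 1 0) (sub_nonneg.mpr htT)]
        exact mul_le_mul e1 e2 hden.le (by linarith [hab k T hT0])
      have hdel0 := (hdelta k).le
      -- δ/Θ * X ≤ δ
      have hfrac : (M k 0 0*M k 1 0*m^2 + M k 0 1*M k 1 1)
          /((M k 0 0*T + M k 0 1)*(M k 1 0*T + M k 1 1))
          * ((M k 0 0*t + M k 0 1)*(M k 1 0*t + M k 1 1))
          ≤ M k 0 0*M k 1 0*m^2 + M k 0 1*M k 1 1 := by
        rw [div_mul_eq_mul_div, div_le_iff₀ (hTheta k)]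
        nlinarith
      -- (ad+bc)t ≤ X − δ
      have hkey : (M k 0 0*M k 1 1 + M k 0 1*M k 1 0)*t
          ≤ (M k 0 0*t + M k 0 1)*(M k 1 0*t + M k 1 1)
            - (M k 0 0*M k 1 0*m^2 + M k 0 1*M k 1 1) := by
        nlinarith [mul_nonneg (mul_nonneg (nn k 0 0) (nn k 1 0))
          (mul_nonneg (sub_nonneg.mpr htm) (by linarith : (0:ℝ) ≤ t + m))]
      calc |(M k 0 0*M k 1 1 - M k 0 1*M k 1 0)*t|
          ≤ (M k 0 0*M k 1 1 + M k 0 1*M k 1 0)*t := habs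
        _ ≤ (M k 0 0*t + M k 0 1)*(M k 1 0*t + M k 1 1)
            - (M k 0 0*M k 1 0*m^2 + M k 0 1*M k 1 1) := hkey
        _ ≤ (1 - (M k 0 0*M k 1 0*m^2 + M k 0 1*M k 1 1)
            /((M k 0 0*T + M k 0 1)*(M k 1 0*T + M k 1 1)))
            * ((M k 0 0*t + M k 0 1)*(M k 1 0*t + M k 1 1)) := by
            rw [sub_mul, one_mul]
            linarith
        _ ≤ lam * ((M k 0 0*t + M k 0 1)*(M k 1 0*t + M k 1 1)) :=
            mul_le_mul_of_nonneg_right (hlamk k) hX.le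
    have hconv : Convex ℝ J := convex_Icc _ _
    have := Convex.norm_image_sub_le_of_norm_hasDerivWithin_le
      (fun x _ => (hderiv x).hasDerivWithinAt) hbound hconv hu' hu
    simpa [Real.norm_eq_abs] using this
  -- link between matrix action and scalar iteration
  have hmv : ∀ (A : Matrix (Fin 2) (Fin 2) ℝ) (Y : Fin 2 → ℝ),
      A.mulVec Y 0 = A 0 0 * Y 0 + A 0 1 * Y 1 ∧
      A.mulVec Y 1 = A 1 0 * Y 0 + A 1 1 * Y 1 := by
    intro A Y
    constructor <;> simp [Matrix.mulVec, dotProduct, Fin.sum_univ_two]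
  have hvec : ∀ (n : ℕ) (ω : ℕ → Fin s) (Y : Fin 2 → ℝ), 0 < Y 0 → 0 < Y 1 →
      Real.log (Y 0 / Y 1) ∈ J →
      0 < (Pprod M ω n).mulVec Y 0 ∧ 0 < (Pprod M ω n).mulVec Y 1 ∧
        Real.log ((Pprod M ω n).mulVec Y 0 / (Pprod M ω n).mulVec Y 1)
          = Eit M ω n (Real.log (Y 0 / Y 1)) := by
    intro n
    induction n with
    | zero =>
      intro ω Y h0 h1' hJY
      refine ⟨?_, ?_, ?_⟩ <;> simp [Pprod, Matrix.one_mulVec, Eit, h0, h1']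
    | succ n ih =>
      intro ω Y h0 h1' hJY
      have hnum := mul_pos (hab (ω n) (Y 0/Y 1) (div_pos h0 h1')) h1'
      have hden := mul_pos (hcd (ω n) (Y 0/Y 1) (div_pos h0 h1')) h1'
      have enum : (M (ω n) 0 0 * (Y 0/Y 1) + M (ω n) 0 1) * Y 1
          = M (ω n) 0 0 * Y 0 + M (ω n) 0 1 * Y 1 := by field_simp
      have eden : (M (ω n) 1 0 * (Y 0/Y 1) + M (ω n) 1 1) * Y 1
          = M (ω n) 1 0 * Y 0 + M (ω n) 1 1 * Y 1 := by field_simp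
      rw [enum] at hnum
      rw [eden] at hden
      have hY'0 : 0 < (M (ω n)).mulVec Y 0 := by
        rw [(hmv (M (ω n)) Y).1]; exact hnum
      have hY'1 : 0 < (M (ω n)).mulVec Y 1 := by
        rw [(hmv (M (ω n)) Y).2]; exact hden
      have hrat : Real.log ((M (ω n)).mulVec Y 0 / (M (ω n)).mulVec Y 1)
          = Gmap (M (ω n) 0 0) (M (ω n) 0 1) (M (ω n) 1 0) (M (ω n) 1 1)
              (Real.log (Y 0 / Y 1)) := by
        rw [(hmv (M (ω n)) Y).1, (hmv (M (ω n)) Y).2]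
        exact (Gmap_log _ _ _ _ (Y 0) (Y 1) h0 h1' hnum hden).symm
      have hJ' : Real.log ((M (ω n)).mulVec Y 0 / (M (ω n)).mulVec Y 1) ∈ J := by
        rw [hrat]; exact hGJ (ω n) _ hJY
      obtain ⟨p0, p1, plog⟩ := ih ω ((M (ω n)).mulVec Y) hY'0 hY'1 hJ'
      have hPmv : (Pprod M ω (n+1)).mulVec Y = (Pprod M ω n).mulVec ((M (ω n)).mulVec Y) := by
        rw [Pprod_succ, Matrix.mulVec_mulVec]
      refine ⟨by rw [hPmv]; exact p0, by rw [hPmv]; exact p1, ?_⟩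
      rw [hPmv, plog, hrat]
      rfl
  -- uniform geometric Cauchy estimates
  set uV : ℝ := Real.log tV with huVdef
  have huVJ : uV ∈ J := ⟨Real.log_le_log hm0 hmtV, Real.log_le_log htV0 htVT.le⟩
  set C : ℝ := Real.log T - Real.log m with hCdef
  have hC0 : 0 ≤ C := sub_nonneg.mpr (Real.log_le_log hm0 hmle)
  have hJdiff : ∀ u u' : ℝ, u ∈ J → u' ∈ J → |u - u'| ≤ C := by
    intro u u' hu hu'
    rw [abs_le]
    refine ⟨?_, ?_⟩
    · have g1 := hu.1; have g2 := hu'.2; rw [hCdef]; linarith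
    · have g1 := hu.2; have g2 := hu'.1; rw [hCdef]; linarith
  have hstep : ∀ (ω : ℕ → Fin s) (n : ℕ),
      dist (Eit M ω n uV) (Eit M ω (n+1) uV) ≤ C * lam^n := by
    intro ω n
    have hw : Gmap (M (ω n) 0 0) (M (ω n) 0 1) (M (ω n) 1 0) (M (ω n) 1 1) uV ∈ J :=
      hGJ (ω n) uV huVJ
    rw [Real.dist_eq]
    calc |Eit M ω n uV - Eit M ω (n+1) uV|
        = |Eit M ω n uV - Eit M ω n
            (Gmap (M (ω n) 0 0) (M (ω n) 0 1) (M (ω n) 1 0) (M (ω n) 1 1) uV)| := rfl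
      _ ≤ lam^n * |uV - Gmap (M (ω n) 0 0) (M (ω n) 0 1) (M (ω n) 1 0) (M (ω n) 1 1) uV| :=
          Eit_lip M J lam hlam0 hGJ hGlip n ω uV _ huVJ hw
      _ ≤ lam^n * C :=
          mul_le_mul_of_nonneg_left (hJdiff _ _ huVJ hw) (pow_nonneg hlam0 n)
      _ = C * lam^n := by ring
  have hlimex : ∀ ω : ℕ → Fin s, ∃ L : ℝ, Tendsto (fun n => Eit M ω n uV) atTop (nhds L) :=
    fun ω => cauchySeq_tendsto_of_complete
      (cauchySeq_of_le_geometric lam C hlam1 (hstep ω))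
  choose F1 hF1 using hlimex
  have hrate : ∀ (ω : ℕ → Fin s) (n : ℕ), |Eit M ω n uV - F1 ω| ≤ C * lam^n := by
    intro ω n
    have htail : Tendsto (fun p => Eit M ω (n+p) uV) atTop (nhds (F1 ω)) := by
      have h' := (hF1 ω).comp (tendsto_add_atTop_nat n)
      have h2 : ((fun p => Eit M ω p uV) ∘ fun p => p + n) = fun p => Eit M ω (n+p) uV := by
        funext p
        simp [Nat.add_comm]
      rwa [h2] at h'
    have h3 : Tendsto (fun p => |Eit M ω n uV - Eit M ω (n+p) uV|) atTop
        (nhds |Eit M ω n uV - F1 ω|) := (tendsto_const_nhds.sub htail).abs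
    refine le_of_tendsto h3 (Filter.Eventually.of_forall fun p => ?_)
    rw [Eit_split M ω p n uV]
    have hw : Eit M (fun i => ω (n+i)) p uV ∈ J := Eit_mem M J hGJ p _ uV huVJ
    calc |Eit M ω n uV - Eit M ω n (Eit M (fun i => ω (n+i)) p uV)|
        ≤ lam^n * |uV - Eit M (fun i => ω (n+i)) p uV| :=
          Eit_lip M J lam hlam0 hGJ hGlip n ω uV _ huVJ hw
      _ ≤ lam^n * C :=
          mul_le_mul_of_nonneg_left (hJdiff _ _ huVJ hw) (pow_nonneg hlam0 n)
      _ = C * lam^n := by ring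
  -- assembly
  refine ⟨fun ω => ![Real.exp (F1 ω)/(Real.exp (F1 ω)+1),
      1 - Real.exp (F1 ω)/(Real.exp (F1 ω)+1)], Metric.tendstoUniformly_iff.mpr ?_⟩
  intro ε hε
  have hgeo : Tendsto (fun n => C * lam^n) atTop (nhds 0) := by
    have h' := (tendsto_pow_atTop_nhds_zero_of_lt_one hlam0 hlam1).const_mul C
    simpa using h'
  filter_upwards [hgeo.eventually (gt_mem_nhds hε)] with n hn ω
  rw [dist_pi_lt_iff hε]
  intro i
  have huVV : Real.log (V 0 / V 1) ∈ J := huVJ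
  obtain ⟨hx0, hx1, hlog⟩ := hvec n ω V hV0 hV1 huVV
  have hnv : nv ((Pprod M ω n).mulVec V)
      = Real.exp (Eit M ω n uV)/(Real.exp (Eit M ω n uV)+1) := by
    rw [show Eit M ω n uV = Eit M ω n (Real.log (V 0 / V 1)) from rfl, ← hlog,
      Real.exp_log (div_pos hx0 hx1)]
    unfold nv
    have hsum : 0 < (Pprod M ω n).mulVec V 0 + (Pprod M ω n).mulVec V 1 := by linarith
    field_simp
  have hcore : |Real.exp (F1 ω)/(Real.exp (F1 ω)+1) - nv ((Pprod M ω n).mulVec V)|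
      ≤ C * lam^n := by
    rw [hnv]
    calc |Real.exp (F1 ω)/(Real.exp (F1 ω)+1)
          - Real.exp (Eit M ω n uV)/(Real.exp (Eit M ω n uV)+1)|
        ≤ |F1 ω - Eit M ω n uV| := psi_lip _ _
      _ = |Eit M ω n uV - F1 ω| := abs_sub_comm _ _
      _ ≤ C * lam^n := hrate ω n
  fin_cases i
  · simp only [Nv, Real.dist_eq, Fin.mk_zero, Fin.mk_one, Matrix.cons_val_zero, Matrix.cons_val_one, Matrix.head_cons]
    exact lt_of_le_of_lt hcore hn
  · simp only [Nv, Real.dist_eq, Fin.mk_zero, Fin.mk_one, Matrix.cons_val_zero, Matrix.cons_val_one, Matrix.head_cons]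
    have e2 : (1:ℝ) - Real.exp (F1 ω)/(Real.exp (F1 ω)+1)
        - (1 - nv ((Pprod M ω n).mulVec V))
        = -(Real.exp (F1 ω)/(Real.exp (F1 ω)+1) - nv ((Pprod M ω n).mulVec V)) := by
      ring
    rw [e2, abs_neg]
    exact lt_of_le_of_lt hcore hn
end
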